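/- Let H be a real Hilbert space and J : H → ℝ Fréchet differentiable on the closed ball B̄(R) with the strict convexity property J(p+h) − J(p) − ⟨J'(p), h⟩ ≥ C‖h‖² for all p, p+h ∈ B̄(R). Let p* ∈ B̄(R), and let p_min ∈ B̄(R) be a minimizer satisfying the variational inequality ⟨J'(p_min), y − p_min⟩ ≥ 0 for all y ∈ B̄(R). If J(p_min) ≥ 0 and J(p*) ≤ C₂ δ², then ‖p_min − p*‖ ≤ √(C₂/C) · δ. -/

import Mathlib

/-- Core of Theorem 5.4 (estimate (5.7)): the minimizer is `√(C₂/C)·δ`-close to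
the exact solution. -/
theorem minimizer_close_to_exact
    {H : Type*} [NormedAddCommGroup H] [InnerProductSpace ℝ H]
    (R C C₂ δ : ℝ) (hR : 0 < R) (hC : 0 < C) (hC₂ : 0 < C₂) (hδ : 0 < δ)
    (J : H → ℝ) (J' : H → H) (pstar pmin : H)
    (hconv : ∀ p h : H, ‖p‖ ≤ R → ‖p + h‖ ≤ R →
      J (p + h) - J p - (inner ℝ (J' p) h : ℝ) ≥ C * ‖h‖ ^ 2)
    (hps : ‖pstar‖ ≤ R) (hpm : ‖pmin‖ ≤ R)
    (hvar : ∀ y : H, ‖y‖ ≤ R → (inner ℝ (J' pmin) (y - pmin) : ℝ) ≥ 0)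
    (hJm : 0 ≤ J pmin) (hJs : J pstar ≤ C₂ * δ ^ 2) :
    ‖pmin - pstar‖ ≤ Real.sqrt (C₂ / C) * δ := by
  have h1 := hconv pmin (pstar - pmin) hpm (by simpa using hps)
  have h2 := hvar pstar hps
  simp only [add_sub_cancel] at h1
  have key : C * ‖pstar - pmin‖ ^ 2 ≤ C₂ * δ ^ 2 := by nlinarith
  have hsq : ‖pmin - pstar‖ ^ 2 ≤ (Real.sqrt (C₂ / C) * δ) ^ 2 := by
    rw [mul_pow, Real.sq_sqrt (by positivity : (0:ℝ) ≤ C₂ / C), norm_sub_rev]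
    rw [div_mul_eq_mul_div, le_div_iff₀ hC]
    nlinarith
  exact (pow_le_pow_iff_left₀ (norm_nonneg _) (by positivity) two_ne_zero).mp hsq
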